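/- Let h: [1,∞) → [0,∞) be a continuous, nondecreasing slowly varying function with h(t) → ∞. Then there exists a function φ(t) with φ(t) ∼ √t / h(t) as t → ∞, such that φ(2t)/φ(t) → √2, log(t/φ(t)²)/h(t) → 0, and φ is eventually strictly increasing. -/

import Mathlib

open Filter

theorem slowly_varying_phi_exists
    (h : ℝ → ℝ)
    (hcont : ContinuousOn h (Set.Ici 1))
    (hnonneg : ∀ t, 1 ≤ t → 0 ≤ h t)
    (hmono : ∀ s t, 1 ≤ s → s ≤ t → h s ≤ h t)
    (hsv : ∀ x : ℝ, 0 < x → Tendsto (fun t => h (x * t) / h t) atTop (nhds 1))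
    (hinf : Tendsto h atTop atTop) :
    ∃ φ : ℝ → ℝ,
      Tendsto (fun t => φ t / (Real.sqrt t / h t)) atTop (nhds 1)
      ∧ Tendsto (fun t => φ (2 * t) / φ t) atTop (nhds (Real.sqrt 2))
      ∧ Tendsto (fun t => Real.log (t / (φ t) ^ 2) / h t) atTop (nhds 0)
      ∧ ∃ t₀ : ℝ, StrictMonoOn φ (Set.Ici t₀) := by
  classical
  obtain ⟨a, ha⟩ := eventually_atTop.1 (hinf.eventually_ge_atTop 1)
  set t₁ : ℝ := max a 1 with ht₁def
  have ht₁1 : (1:ℝ) ≤ t₁ := le_max_right _ _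
  have hht₁ : ∀ t, t₁ ≤ t → 1 ≤ h t := fun t ht => ha t (le_trans (le_max_left a 1) ht)
  have hone : ∀ t : ℝ, t₁ ≤ t → 1 ≤ t := fun t ht => le_trans ht₁1 ht
  have hpos : ∀ t : ℝ, t₁ ≤ t → 0 < t := fun t ht => lt_of_lt_of_le one_pos (hone t ht)
  have hhpos : ∀ t, t₁ ≤ t → 0 < h t := fun t ht => lt_of_lt_of_le one_pos (hht₁ t ht)
  have h2t₁ : ∀ t : ℝ, t₁ ≤ t → t₁ ≤ 2 * t := by
    intro t ht; nlinarith [hpos t ht]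
  set f : ℝ → ℝ := fun x => Real.log (h x) / x with hfdef
  have hfc : ContinuousOn f (Set.Ici t₁) := by
    apply ContinuousOn.div
    · exact (hcont.mono (Set.Ici_subset_Ici.2 ht₁1)).log
        (fun x hx => ne_of_gt (hhpos x hx))
    · exact continuousOn_id
    · exact fun x hx => ne_of_gt (hpos x hx)
  have hfi : ∀ a b : ℝ, t₁ ≤ a → t₁ ≤ b → IntervalIntegrable f MeasureTheory.volume a b := by
    intro a b haa hbb
    apply ContinuousOn.intervalIntegrable
    exact hfc.mono (fun x hx => le_trans (le_inf haa hbb) hx.1)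
  set L : ℝ → ℝ := fun t => (∫ x in t..(2*t), f x) / Real.log 2 with hLdef
  have hlog2 : (0:ℝ) < Real.log 2 := Real.log_pos one_lt_two
  have hinv_int : ∀ t : ℝ, t₁ ≤ t → (∫ x in t..(2*t), x⁻¹) = Real.log 2 := by
    intro t ht
    rw [integral_inv_of_pos (hpos t ht) (by nlinarith [hpos t ht])]
    rw [mul_div_assoc, div_self (ne_of_gt (hpos t ht)), mul_one]
  have hinv_integrable : ∀ s t : ℝ, t₁ ≤ s → t₁ ≤ t →
      IntervalIntegrable (fun x : ℝ => x⁻¹) MeasureTheory.volume s t := by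
    intro s t hs ht
    apply ContinuousOn.intervalIntegrable
    apply ContinuousOn.inv₀ continuousOn_id
    intro x hx
    have : t₁ ≤ x := le_trans (le_inf hs ht) hx.1
    exact ne_of_gt (hpos x this)
  have hLlb : ∀ t, t₁ ≤ t → Real.log (h t) ≤ L t := by
    intro t ht
    have h2t : t ≤ 2*t := by nlinarith [hpos t ht]
    rw [hLdef, le_div_iff₀ hlog2]
    calc Real.log (h t) * Real.log 2
        = Real.log (h t) * ∫ x in t..(2*t), x⁻¹ := by rw [hinv_int t ht]
      _ = ∫ x in t..(2*t), Real.log (h t) * x⁻¹ := (intervalIntegral.integral_const_mul _ _).symm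
      _ ≤ ∫ x in t..(2*t), f x := by
          apply intervalIntegral.integral_mono_on h2t
            ((hinv_integrable t (2*t) ht (h2t₁ t ht)).const_mul _)
            (hfi t (2*t) ht (h2t₁ t ht))
          intro x hx
          have hx1 : t₁ ≤ x := le_trans ht hx.1
          have hxpos : 0 < x := hpos x hx1
          have hlog_le : Real.log (h t) ≤ Real.log (h x) :=
            Real.log_le_log (hhpos t ht) (hmono t x (hone t ht) hx.1)
          have : Real.log (h t) * x⁻¹ ≤ Real.log (h x) * x⁻¹ :=
            mul_le_mul_of_nonneg_right hlog_le (inv_nonneg.2 hxpos.le)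
          simpa [hfdef, div_eq_mul_inv] using this
  have hLub : ∀ t, t₁ ≤ t → L t ≤ Real.log (h (2*t)) := by
    intro t ht
    have h2t : t ≤ 2*t := by nlinarith [hpos t ht]
    rw [hLdef, div_le_iff₀ hlog2]
    calc (∫ x in t..(2*t), f x)
        ≤ ∫ x in t..(2*t), Real.log (h (2*t)) * x⁻¹ := by
          apply intervalIntegral.integral_mono_on h2t
            (hfi t (2*t) ht (h2t₁ t ht))
            ((hinv_integrable t (2*t) ht (h2t₁ t ht)).const_mul _)
          intro x hx
          have hx1 : t₁ ≤ x := le_trans ht hx.1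
          have hxpos : 0 < x := hpos x hx1
          have hlog_le : Real.log (h x) ≤ Real.log (h (2*t)) :=
            Real.log_le_log (hhpos x hx1) (hmono x (2*t) (hone x hx1) hx.2)
          have : Real.log (h x) * x⁻¹ ≤ Real.log (h (2*t)) * x⁻¹ :=
            mul_le_mul_of_nonneg_right hlog_le (inv_nonneg.2 hxpos.le)
          simpa [hfdef, div_eq_mul_inv] using this
      _ = Real.log (h (2*t)) * Real.log 2 := by
          rw [intervalIntegral.integral_const_mul, hinv_int t ht]
  have hlogratio : Tendsto (fun t => Real.log (h (2*t) / h t)) atTop (nhds 0) := by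
    have := (Real.continuousAt_log one_ne_zero).tendsto.comp (hsv 2 two_pos)
    simpa [Function.comp_def] using this
  have hlogdiff_eq : ∀ t, t₁ ≤ t →
      Real.log (h (2*t) / h t) = Real.log (h (2*t)) - Real.log (h t) := by
    intro t ht
    exact Real.log_div (ne_of_gt (hhpos (2*t) (h2t₁ t ht))) (ne_of_gt (hhpos t ht))
  have hLsub : Tendsto (fun t => L t - Real.log (h t)) atTop (nhds 0) := by
    apply tendsto_of_tendsto_of_tendsto_of_le_of_le' tendsto_const_nhds hlogratio
    · filter_upwards [eventually_ge_atTop t₁] with t ht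
      linarith [hLlb t ht]
    · filter_upwards [eventually_ge_atTop t₁] with t ht
      rw [hlogdiff_eq t ht]
      linarith [hLub t ht]
  have h2top : Tendsto (fun t : ℝ => 2*t) atTop atTop :=
    Tendsto.const_mul_atTop two_pos tendsto_id
  have hLsub2 : Tendsto (fun t => L (2*t) - Real.log (h (2*t))) atTop (nhds 0) := by
    have := hLsub.comp h2top
    simpa [Function.comp_def] using this
  set φ : ℝ → ℝ := fun t => Real.exp (Real.log t / 2 - L t) with hφdef
  refine ⟨φ, ?_, ?_, ?_, ?_⟩
  · have hsub1 : Tendsto (fun t => Real.exp (Real.log (h t) - L t)) atTop (nhds 1) := by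
      have h0 : Tendsto (fun t => Real.log (h t) - L t) atTop (nhds 0) := by
        have := hLsub.neg
        simpa [neg_sub] using this
      have := (Real.continuous_exp.tendsto 0).comp h0
      simpa [Function.comp_def, Real.exp_zero] using this
    apply Tendsto.congr' _ hsub1
    filter_upwards [eventually_ge_atTop t₁] with t ht
    have htpos : 0 < t := hpos t ht
    have hhtpos : 0 < h t := hhpos t ht
    have hs : Real.sqrt t = Real.exp (Real.log t / 2) := by
      rw [← Real.log_sqrt htpos.le, Real.exp_log (Real.sqrt_pos.2 htpos)]
    have hd : Real.sqrt t / h t = Real.exp (Real.log t / 2 - Real.log (h t)) := by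
      rw [Real.exp_sub, ← hs, Real.exp_log hhtpos]
    show Real.exp (Real.log (h t) - L t) = φ t / (Real.sqrt t / h t)
    rw [hφdef]
    show Real.exp (Real.log (h t) - L t)
        = Real.exp (Real.log t / 2 - L t) / (Real.sqrt t / h t)
    rw [hd, ← Real.exp_sub]
    congr 1
    ring
  · have hin : Tendsto (fun t => Real.log 2/2 + ((L t - Real.log (h t))
        - (L (2*t) - Real.log (h (2*t))) - Real.log (h (2*t) / h t)))
        atTop (nhds (Real.log 2/2)) := by
      have h0 : Tendsto (fun t => (L t - Real.log (h t))
          - (L (2*t) - Real.log (h (2*t))) - Real.log (h (2*t) / h t)) atTop (nhds 0) := by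
        have := (hLsub.sub hLsub2).sub hlogratio
        simpa using this
      have := (tendsto_const_nhds (α := ℝ) (f := atTop) (x := Real.log 2/2)).add h0
      simpa using this
    have hexp : Tendsto (fun t => Real.exp (Real.log 2/2 + ((L t - Real.log (h t))
        - (L (2*t) - Real.log (h (2*t))) - Real.log (h (2*t) / h t))))
        atTop (nhds (Real.sqrt 2)) := by
      have := (Real.continuous_exp.tendsto _).comp hin
      have h2 : Real.exp (Real.log 2/2) = Real.sqrt 2 := by
        rw [← Real.log_sqrt (by norm_num : (0:ℝ) ≤ 2),
          Real.exp_log (Real.sqrt_pos.2 two_pos)]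
      simpa [Function.comp_def, h2] using this
    apply Tendsto.congr' _ hexp
    filter_upwards [eventually_ge_atTop t₁] with t ht
    have htpos : 0 < t := hpos t ht
    show _ = φ (2*t) / φ t
    rw [hφdef]
    show Real.exp (Real.log 2/2 + ((L t - Real.log (h t))
        - (L (2*t) - Real.log (h (2*t))) - Real.log (h (2*t) / h t)))
        = Real.exp (Real.log (2*t) / 2 - L (2*t)) / Real.exp (Real.log t / 2 - L t)
    rw [← Real.exp_sub]
    congr 1
    rw [Real.log_mul two_ne_zero (ne_of_gt htpos), hlogdiff_eq t ht]
    ring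
  · have hlogh : Tendsto (fun t => Real.log (h t) / h t) atTop (nhds 0) := by
      have h1 := Real.isLittleO_log_id_atTop.tendsto_div_nhds_zero
      have := h1.comp hinf
      simpa [Function.comp_def] using this
    have hmain : Tendsto (fun t => ((L t - Real.log (h t)) / h t
        + Real.log (h t) / h t) * 2) atTop (nhds 0) := by
      have := ((hLsub.div_atTop hinf).add hlogh).mul_const (2:ℝ)
      simpa using this
    apply Tendsto.congr' _ hmain
    filter_upwards [eventually_ge_atTop t₁] with t ht
    have htpos : 0 < t := hpos t ht
    have hφpos : 0 < φ t := Real.exp_pos _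
    have hlogφ : Real.log (φ t) = Real.log t / 2 - L t := Real.log_exp _
    have hkey : Real.log (t / φ t ^ 2) = 2 * L t := by
      rw [Real.log_div (ne_of_gt htpos) (by positivity), Real.log_pow, hlogφ]
      push_cast
      ring
    rw [hkey]
    ring
  · have h4 : (0:ℝ) < Real.log 2/4 := by positivity
    have hb : ∀ᶠ t in atTop, Real.log (h (2*t)) - Real.log (h t) ≤ Real.log 2/4 := by
      filter_upwards [hlogratio.eventually (eventually_le_nhds h4),
        eventually_ge_atTop t₁] with t hle ht
      rwa [hlogdiff_eq t ht] at hle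
    obtain ⟨b, hbev⟩ := eventually_atTop.1 hb
    refine ⟨max b t₁, ?_⟩
    intro s hs t ht hst
    simp only [Set.mem_Ici] at hs ht
    have hs1 : t₁ ≤ s := le_trans (le_max_right b t₁) hs
    have ht1 : t₁ ≤ t := le_trans (le_max_right b t₁) ht
    have hspos : 0 < s := hpos s hs1
    have htpos : 0 < t := hpos t ht1
    have hloglt : Real.log s < Real.log t := Real.log_lt_log hspos hst
    have hg2c : ContinuousOn (fun x : ℝ => Real.log (h (2*x)) / x) (Set.Ici t₁) := by
      apply ContinuousOn.div
      · apply ContinuousOn.log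
        · apply hcont.comp (continuous_const.mul continuous_id).continuousOn
          intro x hx
          simp only [Set.mem_Ici, id_eq, Pi.mul_apply] at hx ⊢
          nlinarith [hone x hx]
        · intro x hx
          exact ne_of_gt (hhpos (2*x) (h2t₁ x hx))
      · exact continuousOn_id
      · exact fun x hx => ne_of_gt (hpos x hx)
    have hg2i : IntervalIntegrable (fun x : ℝ => Real.log (h (2*x)) / x)
        MeasureTheory.volume s t :=
      (hg2c.mono (fun x hx => le_trans (le_inf hs1 ht1) hx.1)).intervalIntegrable
    have e1 : (∫ x in (2*s)..(2*t), f x) = ∫ x in s..t, Real.log (h (2*x)) / x := by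
      rw [← intervalIntegral.smul_integral_comp_mul_left f 2, ← intervalIntegral.integral_smul]
      apply intervalIntegral.integral_congr
      intro x hx
      rw [Set.uIcc_of_le hst.le] at hx
      have hxpos : 0 < x := hpos x (le_trans hs1 hx.1)
      show (2:ℝ) • f (2*x) = Real.log (h (2*x)) / x
      rw [smul_eq_mul]
      show 2 * (Real.log (h (2*x)) / (2*x)) = _
      field_simp
    have i_st := hfi s t hs1 ht1
    have i_t2t := hfi t (2*t) ht1 (h2t₁ t ht1)
    have i_s2s := hfi s (2*s) hs1 (h2t₁ s hs1)
    have i_2s2t := hfi (2*s) (2*t) (h2t₁ s hs1) (h2t₁ t ht1)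
    have add1 := intervalIntegral.integral_add_adjacent_intervals i_st i_t2t
    have add2 := intervalIntegral.integral_add_adjacent_intervals i_s2s i_2s2t
    have hdiff : (∫ x in t..(2*t), f x) - (∫ x in s..(2*s), f x)
        = ∫ x in s..t, (Real.log (h (2*x)) / x - f x) := by
      rw [intervalIntegral.integral_sub hg2i i_st, ← e1]
      linarith [add1, add2]
    have hbound : (∫ x in s..t, (Real.log (h (2*x)) / x - f x))
        ≤ (Real.log 2/4) * (Real.log t - Real.log s) := by
      have hint : (∫ x in s..t, (Real.log 2/4) * x⁻¹)
          = (Real.log 2/4) * (Real.log t - Real.log s) := by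
        rw [intervalIntegral.integral_const_mul, integral_inv_of_pos hspos htpos,
          Real.log_div (ne_of_gt htpos) (ne_of_gt hspos)]
      rw [← hint]
      apply intervalIntegral.integral_mono_on hst.le (hg2i.sub i_st)
        ((hinv_integrable s t hs1 ht1).const_mul _)
      intro x hx
      have hx1 : t₁ ≤ x := le_trans hs1 hx.1
      have hxb : b ≤ x := le_trans (le_max_left b t₁) (le_trans hs hx.1)
      have hxpos : 0 < x := hpos x hx1
      have hstep : Real.log (h (2*x)) - Real.log (h x) ≤ Real.log 2/4 := hbev x hxb
      have heq : Real.log (h (2*x)) / x - f x = (Real.log (h (2*x)) - Real.log (h x)) / x := by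
        rw [hfdef]
        show _ - Real.log (h x) / x = _
        rw [sub_div]
      rw [heq, div_eq_mul_inv]
      exact mul_le_mul_of_nonneg_right hstep (inv_nonneg.2 hxpos.le)
    have key : L t - L s ≤ (Real.log t - Real.log s)/4 := by
      have hLeq : L t - L s
          = (∫ x in s..t, (Real.log (h (2*x)) / x - f x)) / Real.log 2 := by
        rw [hLdef]
        show (∫ x in t..(2*t), f x)/Real.log 2 - (∫ x in s..(2*s), f x)/Real.log 2 = _
        rw [div_sub_div_same, hdiff]
      rw [hLeq, div_le_iff₀ hlog2]
      calc (∫ x in s..t, (Real.log (h (2*x)) / x - f x))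
          ≤ (Real.log 2/4) * (Real.log t - Real.log s) := hbound
        _ = (Real.log t - Real.log s)/4 * Real.log 2 := by ring
    show φ s < φ t
    rw [hφdef]
    show Real.exp (Real.log s / 2 - L s) < Real.exp (Real.log t / 2 - L t)
    apply Real.exp_lt_exp.2
    linarith
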